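/- Let T = (a,b) × (c,d) ⊂ ℝ² with a < b and c < d, let F₁,…,F₄ denote its four closed edges with outward unit normals n₁,…,n₄, let k ≥ 0 be an integer and t ∈ {k, k+1}. Let v : ℝ² → ℝ be continuously differentiable. Denote by π_T^t v the L²(T)-orthogonal projection of v onto the space of bivariate polynomials of total degree at most t, and for each edge F_i by π_{F_i}^k v the L²(F_i)-orthogonal projection (in the arclength parameter) of v restricted to F_i onto univariate polynomials of degree at most k. Then for every bivariate polynomial w of total degree at most k+1: ∫_T ∇(π_T^t v)·∇w dx + Σ_{i=1}^{4} ∫_{F_i} ( π_{F_i}^k v − π_T^t v ) (∇w · n_i) dσ = ∫_T ∇v·∇w dx. Consequently the HHO potential reconstruction applied to the local interpolate of v is the elliptic projection of v: its gradient is L²(T)-orthogonal to gradients of polynomials of degree k+1 with respect to v, and its mean over T equals that of v. -/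

import Mathlib

open MeasureTheory MvPolynomial

lemma aux_natDegree_aeval_le (σf : Fin 2 → Polynomial ℝ) (hσ : ∀ i, (σf i).natDegree ≤ 1)
    (p : MvPolynomial (Fin 2) ℝ) : (aeval σf p).natDegree ≤ p.totalDegree := by
  conv_lhs => rw [p.as_sum, map_sum]
  refine Polynomial.natDegree_sum_le_of_forall_le _ _ (fun m hm => ?_)
  rw [aeval_monomial]
  refine (Polynomial.natDegree_mul_le).trans ?_
  have h1 : (algebraMap ℝ (Polynomial ℝ) (coeff m p)).natDegree = 0 := Polynomial.natDegree_C _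
  rw [h1, zero_add]
  refine (Polynomial.natDegree_prod_le _ _).trans ?_
  refine le_trans ?_ (le_totalDegree hm)
  calc ∑ i ∈ m.support, (σf i ^ m i).natDegree
      ≤ ∑ i ∈ m.support, m i * 1 := by
        refine Finset.sum_le_sum (fun i _ => ?_)
        exact (Polynomial.natDegree_pow_le).trans (Nat.mul_le_mul_left _ (hσ i))
    _ = m.sum fun _ e => e := by simp [Finsupp.sum]

lemma aux_totalDegree_pderiv_le (i : Fin 2) (p : MvPolynomial (Fin 2) ℝ) (n : ℕ)
    (h : p.totalDegree ≤ n + 1) : (pderiv i p).totalDegree ≤ n := by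
  conv_lhs => rw [p.as_sum, map_sum]
  refine totalDegree_finsetSum_le (fun m hm => ?_)
  rw [pderiv_monomial]
  by_cases hmi : m i = 0
  · simp [hmi]
  · refine (totalDegree_monomial_le _ _).trans ?_
    have hms : (m.sum fun _ e => e) ≤ n + 1 := (le_totalDegree hm).trans h
    rw [Finsupp.sum_fintype _ _ (fun _ => rfl)] at hms ⊢
    simp only [Finsupp.tsub_apply, Finsupp.single_apply]
    rw [Fin.sum_univ_two] at hms ⊢
    fin_cases i <;> simp_all <;> omega

lemma aux_derivative_aeval (σf : Fin 2 → Polynomial ℝ) (p : MvPolynomial (Fin 2) ℝ) :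
    (aeval σf p).derivative = ∑ i : Fin 2, aeval σf (pderiv i p) * (σf i).derivative := by
  induction p using MvPolynomial.induction_on with
  | C r => simp [Polynomial.derivative_C, pderiv_C]
  | add p q hp hq => simp [map_add, hp, hq, Finset.sum_add_distrib]; ring
  | mul_X p i hp =>
      rw [map_mul, aeval_X, Polynomial.derivative_mul, hp]
      simp only [pderiv_mul, map_add, map_mul, aeval_X, add_mul, Fin.sum_univ_two]
      fin_cases i <;> simp [pderiv_X_self, pderiv_X_of_ne] <;> ring

lemma aux_eval_aeval (σf : Fin 2 → Polynomial ℝ) (p : MvPolynomial (Fin 2) ℝ) (s : ℝ) :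
    (aeval σf p).eval s = eval (fun i => (σf i).eval s) p := by
  induction p using MvPolynomial.induction_on with
  | C r => simp
  | add p q hp hq => simp [hp, hq]
  | mul_X p i hp => simp [hp]

lemma pt0 (s y : ℝ) : (fun i => (![(Polynomial.X : Polynomial ℝ), Polynomial.C y] i).eval s) = ![s, y] := by
  funext i; fin_cases i <;> simp

lemma pt1 (x s : ℝ) : (fun i => (![(Polynomial.C x : Polynomial ℝ), Polynomial.X] i).eval s) = ![x, s] := by
  funext i; fin_cases i <;> simp

lemma aux_hasDerivAt_eval_line0 (p : MvPolynomial (Fin 2) ℝ) (y s : ℝ) :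
    HasDerivAt (fun u => eval ![u, y] p) (eval ![s, y] (pderiv 0 p)) s := by
  set σf : Fin 2 → Polynomial ℝ := ![Polynomial.X, Polynomial.C y] with hσ
  have he : ∀ u, eval ![u, y] p = (aeval σf p).eval u := fun u => by
    rw [aux_eval_aeval, pt0]
  have hd : ∀ u q, eval ![u, y] (pderiv 0 q) = ((aeval σf q).derivative).eval u := fun u q => by
    rw [aux_derivative_aeval]
    simp only [Polynomial.eval_finset_sum, Fin.sum_univ_two]
    have h0 : (σf 0).derivative = 1 := by simp [hσ]
    have h1 : (σf 1).derivative = 0 := by simp [hσ]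
    rw [h0, h1]
    simp [aux_eval_aeval, pt0]
    rw [hσ, pt0]
  rw [hd]
  exact (funext he : (fun u => eval ![u, y] p) = _) ▸ Polynomial.hasDerivAt _ s

lemma aux_hasDerivAt_eval_line1 (p : MvPolynomial (Fin 2) ℝ) (x s : ℝ) :
    HasDerivAt (fun u => eval ![x, u] p) (eval ![x, s] (pderiv 1 p)) s := by
  set σf : Fin 2 → Polynomial ℝ := ![Polynomial.C x, Polynomial.X] with hσ
  have he : ∀ u, eval ![x, u] p = (aeval σf p).eval u := fun u => by
    rw [aux_eval_aeval, pt1]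
  have hd : ∀ u q, eval ![x, u] (pderiv 1 q) = ((aeval σf q).derivative).eval u := fun u q => by
    rw [aux_derivative_aeval]
    simp only [Polynomial.eval_finset_sum, Fin.sum_univ_two]
    have h0 : (σf 0).derivative = 0 := by simp [hσ]
    have h1 : (σf 1).derivative = 1 := by simp [hσ]
    rw [h0, h1]
    simp [aux_eval_aeval, pt1]
    rw [hσ, pt1]
  rw [hd]
  exact (funext he : (fun u => eval ![x, u] p) = _) ▸ Polynomial.hasDerivAt _ s

lemma aux_line0 (y s : ℝ) : HasDerivAt (fun u : ℝ => (![u, y] : Fin 2 → ℝ)) (Pi.single 0 1) s := by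
  rw [hasDerivAt_pi]
  intro i
  fin_cases i
  · simpa using (hasDerivAt_id' s)
  · simpa using (hasDerivAt_const s y)

lemma aux_line1 (x s : ℝ) : HasDerivAt (fun u : ℝ => (![x, u] : Fin 2 → ℝ)) (Pi.single 1 1) s := by
  rw [hasDerivAt_pi]
  intro i
  fin_cases i
  · simpa using (hasDerivAt_const s x)
  · simpa using (hasDerivAt_id' s)

lemma aux_hasDerivAt_v_line0 {v : (Fin 2 → ℝ) → ℝ} (hv : ContDiff ℝ 1 v) (y s : ℝ) :
    HasDerivAt (fun u => v ![u, y]) (fderiv ℝ v ![s, y] (Pi.single 0 1)) s :=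
  ((hv.differentiable one_ne_zero ![s, y]).hasFDerivAt).comp_hasDerivAt s (aux_line0 y s)

lemma aux_hasDerivAt_v_line1 {v : (Fin 2 → ℝ) → ℝ} (hv : ContDiff ℝ 1 v) (x s : ℝ) :
    HasDerivAt (fun u => v ![x, u]) (fderiv ℝ v ![x, s] (Pi.single 1 1)) s :=
  ((hv.differentiable one_ne_zero ![x, s]).hasFDerivAt).comp_hasDerivAt s (aux_line1 x s)

lemma aux_cont_vec : Continuous (fun p : ℝ × ℝ => (![p.1, p.2] : Fin 2 → ℝ)) := by
  refine continuous_pi (fun i => ?_)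
  fin_cases i
  · simpa using continuous_fst
  · simpa using continuous_snd

lemma aux_cont_fderiv {v : (Fin 2 → ℝ) → ℝ} (hv : ContDiff ℝ 1 v) (i : Fin 2) :
    Continuous (fun x : Fin 2 → ℝ => fderiv ℝ v x (Pi.single i 1)) := by
  have h := (hv.fderiv_right (m := 0) le_rfl).continuous
  exact (ContinuousLinearMap.apply ℝ ℝ (Pi.single i 1)).continuous.comp h

lemma aux_vec_eta (x : Fin 2 → ℝ) : (![x 0, x 1] : Fin 2 → ℝ) = x := by
  funext i; fin_cases i <;> simp

lemma aux_cont_vec' : Continuous (fun p : ℝ × ℝ => (![p.1, p.2] : Fin 2 → ℝ)) := by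
  refine continuous_pi (fun i => ?_)
  fin_cases i
  · simpa using continuous_fst
  · simpa using continuous_snd

lemma aux_integrableOn_prod {f : (Fin 2 → ℝ) → ℝ} (hf : Continuous f) (a b c d : ℝ) :
    IntegrableOn (fun p : ℝ × ℝ => f ![p.1, p.2]) (Set.Ioo a b ×ˢ Set.Ioo c d)
      ((volume : Measure ℝ).prod volume) := by
  have hc : Continuous (fun p : ℝ × ℝ => f ![p.1, p.2]) := hf.comp aux_cont_vec'
  have hK : IsCompact (Set.Icc a b ×ˢ Set.Icc c d) := isCompact_Icc.prod isCompact_Icc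
  have h1 : IntegrableOn (fun p : ℝ × ℝ => f ![p.1, p.2]) (Set.Icc a b ×ˢ Set.Icc c d)
      ((volume : Measure ℝ).prod volume) := by
    have := hc.continuousOn.integrableOn_compact (μ := (volume : Measure ℝ).prod volume) hK
    exact this
  exact h1.mono_set (Set.prod_mono Set.Ioo_subset_Icc_self Set.Ioo_subset_Icc_self)

lemma aux_rect1 {f : (Fin 2 → ℝ) → ℝ} (hf : Continuous f) (a b c d : ℝ) :
    (∫ x in {x : Fin 2 → ℝ | x 0 ∈ Set.Ioo a b ∧ x 1 ∈ Set.Ioo c d}, f x)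
      = ∫ x in Set.Ioo a b, ∫ y in Set.Ioo c d, f ![x, y] := by
  have hT : {x : Fin 2 → ℝ | x 0 ∈ Set.Ioo a b ∧ x 1 ∈ Set.Ioo c d}
      = (MeasurableEquiv.finTwoArrow : (Fin 2 → ℝ) ≃ᵐ ℝ × ℝ) ⁻¹' (Set.Ioo a b ×ˢ Set.Ioo c d) := by
    ext x
    simp [MeasurableEquiv.finTwoArrow, finTwoArrowEquiv]
  rw [hT]
  have hmp := MeasureTheory.volume_preserving_finTwoArrow ℝ
  have := hmp.setIntegral_preimage_emb
      (MeasurableEquiv.finTwoArrow.measurableEmbedding)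
      (fun p : ℝ × ℝ => f ![p.1, p.2]) (Set.Ioo a b ×ˢ Set.Ioo c d)
  rw [show (fun x : Fin 2 → ℝ => f ![(MeasurableEquiv.finTwoArrow x).1,
        (MeasurableEquiv.finTwoArrow x).2]) = f from funext fun x => by
      simp [MeasurableEquiv.finTwoArrow, finTwoArrowEquiv, aux_vec_eta]] at this
  rw [this]
  rw [MeasureTheory.Measure.volume_eq_prod]
  exact MeasureTheory.setIntegral_prod _ (aux_integrableOn_prod hf a b c d)

lemma aux_integrableOn_prod2 {f : (Fin 2 → ℝ) → ℝ} (hf : Continuous f) (a b c d : ℝ) :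
    IntegrableOn (fun p : ℝ × ℝ => f ![p.2, p.1]) (Set.Ioo c d ×ˢ Set.Ioo a b)
      ((volume : Measure ℝ).prod volume) := by
  have hc : Continuous (fun p : ℝ × ℝ => f ![p.2, p.1]) :=
    hf.comp (aux_cont_vec'.comp continuous_swap)
  have hK : IsCompact (Set.Icc c d ×ˢ Set.Icc a b) := isCompact_Icc.prod isCompact_Icc
  exact (hc.continuousOn.integrableOn_compact (μ := (volume : Measure ℝ).prod volume) hK).mono_set
    (Set.prod_mono Set.Ioo_subset_Icc_self Set.Ioo_subset_Icc_self)

lemma aux_rect2 {f : (Fin 2 → ℝ) → ℝ} (hf : Continuous f) (a b c d : ℝ) :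
    (∫ x in {x : Fin 2 → ℝ | x 0 ∈ Set.Ioo a b ∧ x 1 ∈ Set.Ioo c d}, f x)
      = ∫ y in Set.Ioo c d, ∫ x in Set.Ioo a b, f ![x, y] := by
  set e2 : (Fin 2 → ℝ) ≃ᵐ ℝ × ℝ :=
    (MeasurableEquiv.finTwoArrow : (Fin 2 → ℝ) ≃ᵐ ℝ × ℝ).trans MeasurableEquiv.prodComm with he2
  have hmp : MeasurePreserving (⇑e2) (volume : Measure (Fin 2 → ℝ)) volume := by
    have h1 := MeasureTheory.volume_preserving_finTwoArrow ℝ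
    have h2 : MeasurePreserving (Prod.swap : ℝ × ℝ → ℝ × ℝ) volume volume := by
      rw [MeasureTheory.Measure.volume_eq_prod]
      exact MeasureTheory.Measure.measurePreserving_swap
    exact h2.comp h1
  have hT : {x : Fin 2 → ℝ | x 0 ∈ Set.Ioo a b ∧ x 1 ∈ Set.Ioo c d}
      = ⇑e2 ⁻¹' (Set.Ioo c d ×ˢ Set.Ioo a b) := by
    ext x
    simp [he2, MeasurableEquiv.finTwoArrow, finTwoArrowEquiv, MeasurableEquiv.prodComm,
      Equiv.prodComm, and_comm]
  rw [hT]
  have := hmp.setIntegral_preimage_emb e2.measurableEmbedding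
      (fun p : ℝ × ℝ => f ![p.2, p.1]) (Set.Ioo c d ×ˢ Set.Ioo a b)
  rw [show (fun x : Fin 2 → ℝ => f ![(e2 x).2, (e2 x).1]) = f from funext fun x => by
      simp [he2, MeasurableEquiv.finTwoArrow, finTwoArrowEquiv, MeasurableEquiv.prodComm,
        Equiv.prodComm, aux_vec_eta]] at this
  rw [this, MeasureTheory.Measure.volume_eq_prod]
  exact MeasureTheory.setIntegral_prod _ (aux_integrableOn_prod2 hf a b c d)

lemma aux_cont_line0 (y : ℝ) : Continuous (fun x : ℝ => (![x, y] : Fin 2 → ℝ)) :=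
  aux_cont_vec'.comp (continuous_id.prodMk continuous_const)

lemma aux_cont_line1 (x : ℝ) : Continuous (fun y : ℝ => (![x, y] : Fin 2 → ℝ)) :=
  aux_cont_vec'.comp (continuous_const.prodMk continuous_id)

lemma aux_int1d {g : ℝ → ℝ} (hg : Continuous g) (c d : ℝ) :
    IntegrableOn g (Set.Ioo c d) volume :=
  (hg.continuousOn.integrableOn_compact isCompact_Icc).mono_set Set.Ioo_subset_Icc_self

lemma ibp_dir0 {a b c d : ℝ} (hab : a ≤ b) {v : (Fin 2 → ℝ) → ℝ} (hv : ContDiff ℝ 1 v)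
    (P w : MvPolynomial (Fin 2) ℝ) :
    (∫ x in {x : Fin 2 → ℝ | x 0 ∈ Set.Ioo a b ∧ x 1 ∈ Set.Ioo c d},
        ((fderiv ℝ v x (Pi.single 0 1) - eval x (pderiv 0 P)) * eval x (pderiv 0 w)
          + (v x - eval x P) * eval x (pderiv 0 (pderiv 0 w))))
      = (∫ y in Set.Ioo c d, (v ![b, y] - eval ![b, y] P) * eval ![b, y] (pderiv 0 w))
        - ∫ y in Set.Ioo c d, (v ![a, y] - eval ![a, y] P) * eval ![a, y] (pderiv 0 w) := by
  have hfc : Continuous (fun x : Fin 2 → ℝ =>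
      (fderiv ℝ v x (Pi.single 0 1) - eval x (pderiv 0 P)) * eval x (pderiv 0 w)
        + (v x - eval x P) * eval x (pderiv 0 (pderiv 0 w))) := by
    exact ((aux_cont_fderiv hv 0).sub (MvPolynomial.continuous_eval _)).mul
        (MvPolynomial.continuous_eval _) |>.add
      ((hv.continuous.sub (MvPolynomial.continuous_eval _)).mul (MvPolynomial.continuous_eval _))
  rw [aux_rect2 hfc a b c d]
  have hinner : ∀ y : ℝ,
      (∫ x in Set.Ioo a b,
        ((fderiv ℝ v ![x, y] (Pi.single 0 1) - eval ![x, y] (pderiv 0 P)) * eval ![x, y] (pderiv 0 w)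
          + (v ![x, y] - eval ![x, y] P) * eval ![x, y] (pderiv 0 (pderiv 0 w))))
      = (v ![b, y] - eval ![b, y] P) * eval ![b, y] (pderiv 0 w)
        - (v ![a, y] - eval ![a, y] P) * eval ![a, y] (pderiv 0 w) := by
    intro y
    rw [← MeasureTheory.integral_Ioc_eq_integral_Ioo, ← intervalIntegral.integral_of_le hab]
    refine intervalIntegral.integral_eq_sub_of_hasDerivAt (f := fun s => (v ![s, y] - eval ![s, y] P) * eval ![s, y] (pderiv 0 w)) (fun s _ => ?_) ?_
    · exact ((aux_hasDerivAt_v_line0 hv y s).sub (aux_hasDerivAt_eval_line0 P y s)).mul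
        (aux_hasDerivAt_eval_line0 (pderiv 0 w) y s)
    · exact (hfc.comp (aux_cont_line0 y)).intervalIntegrable a b
  rw [MeasureTheory.integral_congr_ae (Filter.Eventually.of_forall hinner)]
  refine MeasureTheory.integral_sub ?_ ?_
  · exact aux_int1d (((hv.continuous.comp (aux_cont_line1 b)).sub
      ((MvPolynomial.continuous_eval _).comp (aux_cont_line1 b))).mul
      ((MvPolynomial.continuous_eval _).comp (aux_cont_line1 b))) c d
  · exact aux_int1d (((hv.continuous.comp (aux_cont_line1 a)).sub
      ((MvPolynomial.continuous_eval _).comp (aux_cont_line1 a))).mul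
      ((MvPolynomial.continuous_eval _).comp (aux_cont_line1 a))) c d

lemma ibp_dir1 {a b c d : ℝ} (hcd : c ≤ d) {v : (Fin 2 → ℝ) → ℝ} (hv : ContDiff ℝ 1 v)
    (P w : MvPolynomial (Fin 2) ℝ) :
    (∫ x in {x : Fin 2 → ℝ | x 0 ∈ Set.Ioo a b ∧ x 1 ∈ Set.Ioo c d},
        ((fderiv ℝ v x (Pi.single 1 1) - eval x (pderiv 1 P)) * eval x (pderiv 1 w)
          + (v x - eval x P) * eval x (pderiv 1 (pderiv 1 w))))
      = (∫ x in Set.Ioo a b, (v ![x, d] - eval ![x, d] P) * eval ![x, d] (pderiv 1 w))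
        - ∫ x in Set.Ioo a b, (v ![x, c] - eval ![x, c] P) * eval ![x, c] (pderiv 1 w) := by
  have hfc : Continuous (fun x : Fin 2 → ℝ =>
      (fderiv ℝ v x (Pi.single 1 1) - eval x (pderiv 1 P)) * eval x (pderiv 1 w)
        + (v x - eval x P) * eval x (pderiv 1 (pderiv 1 w))) := by
    exact ((aux_cont_fderiv hv 1).sub (MvPolynomial.continuous_eval _)).mul
        (MvPolynomial.continuous_eval _) |>.add
      ((hv.continuous.sub (MvPolynomial.continuous_eval _)).mul (MvPolynomial.continuous_eval _))
  rw [aux_rect1 hfc a b c d]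
  have hinner : ∀ x : ℝ,
      (∫ y in Set.Ioo c d,
        ((fderiv ℝ v ![x, y] (Pi.single 1 1) - eval ![x, y] (pderiv 1 P)) * eval ![x, y] (pderiv 1 w)
          + (v ![x, y] - eval ![x, y] P) * eval ![x, y] (pderiv 1 (pderiv 1 w))))
      = (v ![x, d] - eval ![x, d] P) * eval ![x, d] (pderiv 1 w)
        - (v ![x, c] - eval ![x, c] P) * eval ![x, c] (pderiv 1 w) := by
    intro x
    rw [← MeasureTheory.integral_Ioc_eq_integral_Ioo, ← intervalIntegral.integral_of_le hcd]
    refine intervalIntegral.integral_eq_sub_of_hasDerivAt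
      (f := fun s => (v ![x, s] - eval ![x, s] P) * eval ![x, s] (pderiv 1 w)) (fun s _ => ?_) ?_
    · exact ((aux_hasDerivAt_v_line1 hv x s).sub (aux_hasDerivAt_eval_line1 P x s)).mul
        (aux_hasDerivAt_eval_line1 (pderiv 1 w) x s)
    · exact (hfc.comp (aux_cont_line1 x)).intervalIntegrable c d
  rw [MeasureTheory.integral_congr_ae (Filter.Eventually.of_forall hinner)]
  refine MeasureTheory.integral_sub ?_ ?_
  · exact aux_int1d (((hv.continuous.comp (aux_cont_line0 d)).sub
      ((MvPolynomial.continuous_eval _).comp (aux_cont_line0 d))).mul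
      ((MvPolynomial.continuous_eval _).comp (aux_cont_line0 d))) a b
  · exact aux_int1d (((hv.continuous.comp (aux_cont_line0 c)).sub
      ((MvPolynomial.continuous_eval _).comp (aux_cont_line0 c))).mul
      ((MvPolynomial.continuous_eval _).comp (aux_cont_line0 c))) a b

lemma edge_vert {k : ℕ} (x₀ c d : ℝ) (hcd : c ≤ d) {v : (Fin 2 → ℝ) → ℝ} (hv : Continuous v)
    (π : Polynomial ℝ)
    (hπ : ∀ q : Polynomial ℝ, q.natDegree ≤ k →
      ∫ s in (0:ℝ)..(d - c), (v ![x₀, c + s] - π.eval s) * q.eval s = 0)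
    (P g : MvPolynomial (Fin 2) ℝ) (hg : g.totalDegree ≤ k) :
    (∫ y in Set.Ioo c d, (v ![x₀, y] - eval ![x₀, y] P) * eval ![x₀, y] g)
      = ∫ s in (0:ℝ)..(d - c), (π.eval s - eval ![x₀, c + s] P) * eval ![x₀, c + s] g := by
  set q : Polynomial ℝ := aeval ![Polynomial.C x₀, Polynomial.C c + Polynomial.X] g with hq
  have hqe : ∀ s : ℝ, q.eval s = eval ![x₀, c + s] g := by
    intro s
    rw [hq, aux_eval_aeval]
    have hpt : (fun i => Polynomial.eval s (![Polynomial.C x₀, Polynomial.C c + Polynomial.X] i))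
        = (![x₀, c + s] : Fin 2 → ℝ) := by
      funext i; fin_cases i <;> simp
    rw [hpt]
  have hqdeg : q.natDegree ≤ k := by
    refine (aux_natDegree_aeval_le _ (fun i => ?_) g).trans hg
    fin_cases i
    · simp
    · simpa using (Polynomial.natDegree_add_le _ _).trans (by simp)
  have h1 : (∫ y in Set.Ioo c d, (v ![x₀, y] - eval ![x₀, y] P) * eval ![x₀, y] g)
      = ∫ s in (0:ℝ)..(d - c), (v ![x₀, c + s] - eval ![x₀, c + s] P) * eval ![x₀, c + s] g := by
    rw [← MeasureTheory.integral_Ioc_eq_integral_Ioo, ← intervalIntegral.integral_of_le hcd]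
    have := intervalIntegral.integral_comp_add_left
      (a := (0:ℝ)) (b := d - c) (fun y => (v ![x₀, y] - eval ![x₀, y] P) * eval ![x₀, y] g) c
    rw [this, add_zero, show c + (d - c) = d by ring]
  rw [h1]
  have hsplit : ∀ s : ℝ, (v ![x₀, c + s] - eval ![x₀, c + s] P) * eval ![x₀, c + s] g
      = (v ![x₀, c + s] - π.eval s) * q.eval s
        + (π.eval s - eval ![x₀, c + s] P) * eval ![x₀, c + s] g := by
    intro s; rw [hqe]; ring
  rw [intervalIntegral.integral_congr (fun s _ => hsplit s)]
  have hc1 : Continuous (fun s : ℝ => (v ![x₀, c + s] - π.eval s) * q.eval s) := by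
    have hline : Continuous (fun s : ℝ => (![x₀, c + s] : Fin 2 → ℝ)) :=
      (aux_cont_line1 x₀).comp (continuous_const.add continuous_id)
    exact ((hv.comp hline).sub π.continuous).mul q.continuous
  have hc2 : Continuous (fun s : ℝ => (π.eval s - eval ![x₀, c + s] P) * eval ![x₀, c + s] g) := by
    have hline : Continuous (fun s : ℝ => (![x₀, c + s] : Fin 2 → ℝ)) :=
      (aux_cont_line1 x₀).comp (continuous_const.add continuous_id)
    exact (π.continuous.sub ((MvPolynomial.continuous_eval _).comp hline)).mul
      ((MvPolynomial.continuous_eval _).comp hline)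
  rw [intervalIntegral.integral_add (hc1.intervalIntegrable _ _) (hc2.intervalIntegrable _ _),
    hπ q hqdeg, zero_add]

lemma edge_horiz {k : ℕ} (y₀ a b : ℝ) (hab : a ≤ b) {v : (Fin 2 → ℝ) → ℝ} (hv : Continuous v)
    (π : Polynomial ℝ)
    (hπ : ∀ q : Polynomial ℝ, q.natDegree ≤ k →
      ∫ s in (0:ℝ)..(b - a), (v ![a + s, y₀] - π.eval s) * q.eval s = 0)
    (P g : MvPolynomial (Fin 2) ℝ) (hg : g.totalDegree ≤ k) :
    (∫ x in Set.Ioo a b, (v ![x, y₀] - eval ![x, y₀] P) * eval ![x, y₀] g)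
      = ∫ s in (0:ℝ)..(b - a), (π.eval s - eval ![a + s, y₀] P) * eval ![a + s, y₀] g := by
  set q : Polynomial ℝ := aeval ![Polynomial.C a + Polynomial.X, Polynomial.C y₀] g with hq
  have hqe : ∀ s : ℝ, q.eval s = eval ![a + s, y₀] g := by
    intro s
    rw [hq, aux_eval_aeval]
    have hpt : (fun i => Polynomial.eval s (![Polynomial.C a + Polynomial.X, Polynomial.C y₀] i))
        = (![a + s, y₀] : Fin 2 → ℝ) := by
      funext i; fin_cases i <;> simp
    rw [hpt]
  have hqdeg : q.natDegree ≤ k := by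
    refine (aux_natDegree_aeval_le _ (fun i => ?_) g).trans hg
    fin_cases i
    · simpa using (Polynomial.natDegree_add_le _ _).trans (by simp)
    · simp
  have h1 : (∫ x in Set.Ioo a b, (v ![x, y₀] - eval ![x, y₀] P) * eval ![x, y₀] g)
      = ∫ s in (0:ℝ)..(b - a), (v ![a + s, y₀] - eval ![a + s, y₀] P) * eval ![a + s, y₀] g := by
    rw [← MeasureTheory.integral_Ioc_eq_integral_Ioo, ← intervalIntegral.integral_of_le hab]
    have := intervalIntegral.integral_comp_add_left
      (a := (0:ℝ)) (b := b - a) (fun x => (v ![x, y₀] - eval ![x, y₀] P) * eval ![x, y₀] g) a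
    rw [this, add_zero, show a + (b - a) = b by ring]
  rw [h1]
  have hsplit : ∀ s : ℝ, (v ![a + s, y₀] - eval ![a + s, y₀] P) * eval ![a + s, y₀] g
      = (v ![a + s, y₀] - π.eval s) * q.eval s
        + (π.eval s - eval ![a + s, y₀] P) * eval ![a + s, y₀] g := by
    intro s; rw [hqe]; ring
  rw [intervalIntegral.integral_congr (fun s _ => hsplit s)]
  have hline : Continuous (fun s : ℝ => (![a + s, y₀] : Fin 2 → ℝ)) :=
    (aux_cont_line0 y₀).comp (continuous_const.add continuous_id)
  have hc1 : Continuous (fun s : ℝ => (v ![a + s, y₀] - π.eval s) * q.eval s) :=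
    ((hv.comp hline).sub π.continuous).mul q.continuous
  have hc2 : Continuous (fun s : ℝ =>
      (π.eval s - eval ![a + s, y₀] P) * eval ![a + s, y₀] g) :=
    (π.continuous.sub ((MvPolynomial.continuous_eval _).comp hline)).mul
      ((MvPolynomial.continuous_eval _).comp hline)
  rw [intervalIntegral.integral_add (hc1.intervalIntegrable _ _) (hc2.intervalIntegrable _ _),
    hπ q hqdeg, zero_add]

lemma aux_integrableOn_T {f : (Fin 2 → ℝ) → ℝ} (hf : Continuous f) (a b c d : ℝ) :
    IntegrableOn f {x : Fin 2 → ℝ | x 0 ∈ Set.Ioo a b ∧ x 1 ∈ Set.Ioo c d} volume := by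
  have hsub : {x : Fin 2 → ℝ | x 0 ∈ Set.Ioo a b ∧ x 1 ∈ Set.Ioo c d}
      ⊆ Set.Icc (![a, c] : Fin 2 → ℝ) ![b, d] := by
    rintro x ⟨h0, h1⟩
    constructor <;> intro i <;> fin_cases i <;>
      simp_all [Set.mem_Ioo, le_of_lt h0.1, le_of_lt h0.2, le_of_lt h1.1, le_of_lt h1.2]
  exact (hf.continuousOn.integrableOn_compact isCompact_Icc).mono_set hsub

/-- Elliptic-projection property of the HHO potential reconstruction on a rectangle
`T = (a,b) × (c,d)`: for a `C¹` function `v`, its `L²(T)`-projection `P` onto bivariate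
polynomials of total degree at most `t` and its edge `L²`-projections `πB, πR, πT', πL`
onto univariate polynomials of degree at most `k` (bottom, right, top, left edges,
with outward normals `(0,-1), (1,0), (0,1), (-1,0)`) satisfy, for every bivariate
polynomial `w` of total degree at most `k+1`,
`∫_T ∇P·∇w + Σ_F ∫_F (π_F v − P)(∇w·n_F) = ∫_T ∇v·∇w`. -/
theorem stmt_6 (k t : ℕ) (ht : t = k ∨ t = k + 1)
    (a b c d : ℝ) (hab : a < b) (hcd : c < d)
    (v : (Fin 2 → ℝ) → ℝ) (hv : ContDiff ℝ 1 v)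
    (P : MvPolynomial (Fin 2) ℝ) (hPdeg : P.totalDegree ≤ t)
    (hPproj : ∀ r : MvPolynomial (Fin 2) ℝ, r.totalDegree ≤ t →
      ∫ x in {x : Fin 2 → ℝ | x 0 ∈ Set.Ioo a b ∧ x 1 ∈ Set.Ioo c d},
        (v x - eval x P) * eval x r = 0)
    (πB : Polynomial ℝ) (hπBdeg : πB.natDegree ≤ k)
    (hπB : ∀ q : Polynomial ℝ, q.natDegree ≤ k →
      ∫ s in (0:ℝ)..(b - a), (v ![a + s, c] - πB.eval s) * q.eval s = 0)
    (πR : Polynomial ℝ) (hπRdeg : πR.natDegree ≤ k)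
    (hπR : ∀ q : Polynomial ℝ, q.natDegree ≤ k →
      ∫ s in (0:ℝ)..(d - c), (v ![b, c + s] - πR.eval s) * q.eval s = 0)
    (πT' : Polynomial ℝ) (hπTdeg : πT'.natDegree ≤ k)
    (hπT : ∀ q : Polynomial ℝ, q.natDegree ≤ k →
      ∫ s in (0:ℝ)..(b - a), (v ![a + s, d] - πT'.eval s) * q.eval s = 0)
    (πL : Polynomial ℝ) (hπLdeg : πL.natDegree ≤ k)
    (hπL : ∀ q : Polynomial ℝ, q.natDegree ≤ k →
      ∫ s in (0:ℝ)..(d - c), (v ![a, c + s] - πL.eval s) * q.eval s = 0) :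
    ∀ w : MvPolynomial (Fin 2) ℝ, w.totalDegree ≤ k + 1 →
      (∫ x in {x : Fin 2 → ℝ | x 0 ∈ Set.Ioo a b ∧ x 1 ∈ Set.Ioo c d},
          ∑ i : Fin 2, eval x (pderiv i P) * eval x (pderiv i w))
      + ((∫ s in (0:ℝ)..(b - a),
            (πB.eval s - eval ![a + s, c] P) * (-(eval ![a + s, c] (pderiv (1 : Fin 2) w))))
        + (∫ s in (0:ℝ)..(d - c),
            (πR.eval s - eval ![b, c + s] P) * (eval ![b, c + s] (pderiv (0 : Fin 2) w)))
        + (∫ s in (0:ℝ)..(b - a),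
            (πT'.eval s - eval ![a + s, d] P) * (eval ![a + s, d] (pderiv (1 : Fin 2) w)))
        + (∫ s in (0:ℝ)..(d - c),
            (πL.eval s - eval ![a, c + s] P) * (-(eval ![a, c + s] (pderiv (0 : Fin 2) w)))))
      = ∫ x in {x : Fin 2 → ℝ | x 0 ∈ Set.Ioo a b ∧ x 1 ∈ Set.Ioo c d},
          ∑ i : Fin 2, (fderiv ℝ v x) (Pi.single i 1) * eval x (pderiv i w) := by
  intro w hw
  have hab' : a ≤ b := hab.le
  have hcd' : c ≤ d := hcd.le
  have hkt : k ≤ t := by rcases ht with h | h <;> omega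
  have hd1 : ∀ i : Fin 2, (pderiv i w).totalDegree ≤ k :=
    fun i => aux_totalDegree_pderiv_le i w k hw
  have hd2 : ∀ i j : Fin 2, (pderiv i (pderiv j w)).totalDegree ≤ t := fun i j =>
    (aux_totalDegree_pderiv_le i _ k ((hd1 j).trans (Nat.le_succ k))).trans hkt
  -- edges
  have hR := edge_vert (k := k) b c d hcd' hv.continuous πR hπR P (pderiv 0 w) (hd1 0)
  have hL := edge_vert (k := k) a c d hcd' hv.continuous πL hπL P (pderiv 0 w) (hd1 0)
  have hT2 := edge_horiz (k := k) d a b hab' hv.continuous πT' hπT P (pderiv 1 w) (hd1 1)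
  have hB2 := edge_horiz (k := k) c a b hab' hv.continuous πB hπB P (pderiv 1 w) (hd1 1)
  have e0 := ibp_dir0 (c := c) (d := d) hab' hv P w
  have e1 := ibp_dir1 (a := a) (b := b) hcd' hv P w
  rw [hR, hL] at e0
  rw [hT2, hB2] at e1
  -- Laplacian term vanishes
  have hG : (∫ x in {x : Fin 2 → ℝ | x 0 ∈ Set.Ioo a b ∧ x 1 ∈ Set.Ioo c d},
      ((v x - eval x P) * eval x (pderiv 0 (pderiv 0 w))
        + (v x - eval x P) * eval x (pderiv 1 (pderiv 1 w)))) = 0 := by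
    have hr : (pderiv 0 (pderiv 0 w) + pderiv 1 (pderiv 1 w)).totalDegree ≤ t :=
      (MvPolynomial.totalDegree_add _ _).trans (max_le (hd2 0 0) (hd2 1 1))
    have := hPproj _ hr
    rw [show (fun x : Fin 2 → ℝ => (v x - eval x P) * eval x (pderiv 0 (pderiv 0 w))
        + (v x - eval x P) * eval x (pderiv 1 (pderiv 1 w)))
      = fun x : Fin 2 → ℝ =>
        (v x - eval x P) * eval x (pderiv 0 (pderiv 0 w) + pderiv 1 (pderiv 1 w)) from
      funext fun x => by rw [map_add]; ring]
    exact this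
  -- continuity facts
  have hcD0 : Continuous (fun x : Fin 2 → ℝ =>
      (fderiv ℝ v x (Pi.single 0 1) - eval x (pderiv 0 P)) * eval x (pderiv 0 w)
        + (v x - eval x P) * eval x (pderiv 0 (pderiv 0 w))) :=
    (((aux_cont_fderiv hv 0).sub (MvPolynomial.continuous_eval _)).mul
      (MvPolynomial.continuous_eval _)).add
      ((hv.continuous.sub (MvPolynomial.continuous_eval _)).mul (MvPolynomial.continuous_eval _))
  have hcD1 : Continuous (fun x : Fin 2 → ℝ =>
      (fderiv ℝ v x (Pi.single 1 1) - eval x (pderiv 1 P)) * eval x (pderiv 1 w)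
        + (v x - eval x P) * eval x (pderiv 1 (pderiv 1 w))) :=
    (((aux_cont_fderiv hv 1).sub (MvPolynomial.continuous_eval _)).mul
      (MvPolynomial.continuous_eval _)).add
      ((hv.continuous.sub (MvPolynomial.continuous_eval _)).mul (MvPolynomial.continuous_eval _))
  have hcG : Continuous (fun x : Fin 2 → ℝ =>
      (v x - eval x P) * eval x (pderiv 0 (pderiv 0 w))
        + (v x - eval x P) * eval x (pderiv 1 (pderiv 1 w))) :=
    ((hv.continuous.sub (MvPolynomial.continuous_eval _)).mul
      (MvPolynomial.continuous_eval _)).add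
      ((hv.continuous.sub (MvPolynomial.continuous_eval _)).mul (MvPolynomial.continuous_eval _))
  have hcA : Continuous (fun x : Fin 2 → ℝ =>
      eval x (pderiv 0 P) * eval x (pderiv 0 w) + eval x (pderiv 1 P) * eval x (pderiv 1 w)) :=
    ((MvPolynomial.continuous_eval _).mul (MvPolynomial.continuous_eval _)).add
      ((MvPolynomial.continuous_eval _).mul (MvPolynomial.continuous_eval _))
  have hcV : Continuous (fun x : Fin 2 → ℝ =>
      fderiv ℝ v x (Pi.single 0 1) * eval x (pderiv 0 w)
        + fderiv ℝ v x (Pi.single 1 1) * eval x (pderiv 1 w)) :=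
    ((aux_cont_fderiv hv 0).mul (MvPolynomial.continuous_eval _)).add
      ((aux_cont_fderiv hv 1).mul (MvPolynomial.continuous_eval _))
  -- main identity on the area integrals
  have h1 : (∫ x in {x : Fin 2 → ℝ | x 0 ∈ Set.Ioo a b ∧ x 1 ∈ Set.Ioo c d},
        ((fderiv ℝ v x (Pi.single 0 1) * eval x (pderiv 0 w)
            + fderiv ℝ v x (Pi.single 1 1) * eval x (pderiv 1 w))
          - (eval x (pderiv 0 P) * eval x (pderiv 0 w)
            + eval x (pderiv 1 P) * eval x (pderiv 1 w))))
      = (∫ x in {x : Fin 2 → ℝ | x 0 ∈ Set.Ioo a b ∧ x 1 ∈ Set.Ioo c d},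
          (fderiv ℝ v x (Pi.single 0 1) * eval x (pderiv 0 w)
            + fderiv ℝ v x (Pi.single 1 1) * eval x (pderiv 1 w)))
        - (∫ x in {x : Fin 2 → ℝ | x 0 ∈ Set.Ioo a b ∧ x 1 ∈ Set.Ioo c d},
          (eval x (pderiv 0 P) * eval x (pderiv 0 w)
            + eval x (pderiv 1 P) * eval x (pderiv 1 w))) :=
    MeasureTheory.integral_sub (aux_integrableOn_T hcV a b c d) (aux_integrableOn_T hcA a b c d)
  have h2 : (∫ x in {x : Fin 2 → ℝ | x 0 ∈ Set.Ioo a b ∧ x 1 ∈ Set.Ioo c d},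
        (((fderiv ℝ v x (Pi.single 0 1) - eval x (pderiv 0 P)) * eval x (pderiv 0 w)
            + (v x - eval x P) * eval x (pderiv 0 (pderiv 0 w)))
          + ((fderiv ℝ v x (Pi.single 1 1) - eval x (pderiv 1 P)) * eval x (pderiv 1 w)
            + (v x - eval x P) * eval x (pderiv 1 (pderiv 1 w)))))
      = (∫ x in {x : Fin 2 → ℝ | x 0 ∈ Set.Ioo a b ∧ x 1 ∈ Set.Ioo c d},
          ((fderiv ℝ v x (Pi.single 0 1) - eval x (pderiv 0 P)) * eval x (pderiv 0 w)
            + (v x - eval x P) * eval x (pderiv 0 (pderiv 0 w))))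
        + (∫ x in {x : Fin 2 → ℝ | x 0 ∈ Set.Ioo a b ∧ x 1 ∈ Set.Ioo c d},
          ((fderiv ℝ v x (Pi.single 1 1) - eval x (pderiv 1 P)) * eval x (pderiv 1 w)
            + (v x - eval x P) * eval x (pderiv 1 (pderiv 1 w)))) :=
    MeasureTheory.integral_add (aux_integrableOn_T hcD0 a b c d) (aux_integrableOn_T hcD1 a b c d)
  have h3 : (∫ x in {x : Fin 2 → ℝ | x 0 ∈ Set.Ioo a b ∧ x 1 ∈ Set.Ioo c d},
        ((((fderiv ℝ v x (Pi.single 0 1) - eval x (pderiv 0 P)) * eval x (pderiv 0 w)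
            + (v x - eval x P) * eval x (pderiv 0 (pderiv 0 w)))
          + ((fderiv ℝ v x (Pi.single 1 1) - eval x (pderiv 1 P)) * eval x (pderiv 1 w)
            + (v x - eval x P) * eval x (pderiv 1 (pderiv 1 w))))
          - ((v x - eval x P) * eval x (pderiv 0 (pderiv 0 w))
            + (v x - eval x P) * eval x (pderiv 1 (pderiv 1 w)))))
      = (∫ x in {x : Fin 2 → ℝ | x 0 ∈ Set.Ioo a b ∧ x 1 ∈ Set.Ioo c d},
          (((fderiv ℝ v x (Pi.single 0 1) - eval x (pderiv 0 P)) * eval x (pderiv 0 w)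
            + (v x - eval x P) * eval x (pderiv 0 (pderiv 0 w)))
          + ((fderiv ℝ v x (Pi.single 1 1) - eval x (pderiv 1 P)) * eval x (pderiv 1 w)
            + (v x - eval x P) * eval x (pderiv 1 (pderiv 1 w)))))
        - (∫ x in {x : Fin 2 → ℝ | x 0 ∈ Set.Ioo a b ∧ x 1 ∈ Set.Ioo c d},
          ((v x - eval x P) * eval x (pderiv 0 (pderiv 0 w))
            + (v x - eval x P) * eval x (pderiv 1 (pderiv 1 w)))) :=
    MeasureTheory.integral_sub
      (Integrable.add (aux_integrableOn_T hcD0 a b c d) (aux_integrableOn_T hcD1 a b c d))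
      (aux_integrableOn_T hcG a b c d)
  have h4 : (∫ x in {x : Fin 2 → ℝ | x 0 ∈ Set.Ioo a b ∧ x 1 ∈ Set.Ioo c d},
        ((fderiv ℝ v x (Pi.single 0 1) * eval x (pderiv 0 w)
            + fderiv ℝ v x (Pi.single 1 1) * eval x (pderiv 1 w))
          - (eval x (pderiv 0 P) * eval x (pderiv 0 w)
            + eval x (pderiv 1 P) * eval x (pderiv 1 w))))
      = ∫ x in {x : Fin 2 → ℝ | x 0 ∈ Set.Ioo a b ∧ x 1 ∈ Set.Ioo c d},
        ((((fderiv ℝ v x (Pi.single 0 1) - eval x (pderiv 0 P)) * eval x (pderiv 0 w)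
            + (v x - eval x P) * eval x (pderiv 0 (pderiv 0 w)))
          + ((fderiv ℝ v x (Pi.single 1 1) - eval x (pderiv 1 P)) * eval x (pderiv 1 w)
            + (v x - eval x P) * eval x (pderiv 1 (pderiv 1 w))))
          - ((v x - eval x P) * eval x (pderiv 0 (pderiv 0 w))
            + (v x - eval x P) * eval x (pderiv 1 (pderiv 1 w)))) :=
    MeasureTheory.integral_congr_ae (Filter.Eventually.of_forall (fun x => by ring))
  -- rewrite the goal
  simp only [Fin.sum_univ_two]
  have hBneg : (∫ s in (0:ℝ)..(b - a),
        (πB.eval s - eval ![a + s, c] P) * (-(eval ![a + s, c] (pderiv (1 : Fin 2) w))))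
      = -∫ s in (0:ℝ)..(b - a),
        (πB.eval s - eval ![a + s, c] P) * eval ![a + s, c] (pderiv (1 : Fin 2) w) := by
    rw [← intervalIntegral.integral_neg]
    refine intervalIntegral.integral_congr (fun s _ => by ring)
  have hLneg : (∫ s in (0:ℝ)..(d - c),
        (πL.eval s - eval ![a, c + s] P) * (-(eval ![a, c + s] (pderiv (0 : Fin 2) w))))
      = -∫ s in (0:ℝ)..(d - c),
        (πL.eval s - eval ![a, c + s] P) * eval ![a, c + s] (pderiv (0 : Fin 2) w) := by
    rw [← intervalIntegral.integral_neg]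
    refine intervalIntegral.integral_congr (fun s _ => by ring)
  rw [hBneg, hLneg]
  linarith [h1, h2, h3, h4, e0, e1, hG]
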